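/- Let 0 < x < 1 and let Zᵢ be independent geometric random variables with P(Zᵢ ≥ k) = x^{ik}. Set R_n = ∑_{i>n} Zᵢ. Then P(R_n > 1) ≤ (x^{n+1}/(1−x))². -/

import Mathlib

open MeasureTheory ProbabilityTheory Filter

lemma sum_two_aux (s : Finset ℕ) (f : ℕ → ℕ) (h : 2 ≤ ∑ i ∈ s, f i) :
    ∃ i ∈ s, ∃ j ∈ s, (i = j ∧ 2 ≤ f i) ∨ (i ≠ j ∧ 1 ≤ f i ∧ 1 ≤ f j) := by
  by_cases hc : ∃ i ∈ s, 2 ≤ f i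
  · obtain ⟨i, hi, h2⟩ := hc
    exact ⟨i, hi, i, hi, Or.inl ⟨rfl, h2⟩⟩
  · push_neg at hc
    set t := s.filter (fun i => 1 ≤ f i) with ht
    have hcard : 2 ≤ t.card := by
      have h1 : ∑ i ∈ s, f i ≤ t.card := by
        calc ∑ i ∈ s, f i = ∑ i ∈ t, f i := by
              refine (Finset.sum_filter_of_ne ?_).symm
              intro i _ hfi
              omega
          _ ≤ ∑ i ∈ t, 1 := by
              refine Finset.sum_le_sum ?_
              intro i hi
              have := hc i (Finset.mem_filter.mp hi).1
              omega
          _ = t.card := by simp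
      omega
    obtain ⟨i, hi, j, hj, hij⟩ := Finset.one_lt_card.mp hcard
    have hi' := Finset.mem_filter.mp hi
    have hj' := Finset.mem_filter.mp hj
    exact ⟨i, hi'.1, j, hj'.1, Or.inr ⟨hij, hi'.2, hj'.2⟩⟩

theorem Rn_tail_bound {Ω : Type*} [MeasurableSpace Ω] (P : Measure Ω)
    [IsProbabilityMeasure P] (x : ℝ) (hx0 : 0 < x) (hx1 : x < 1)
    (Z : ℕ → Ω → ℕ) (hmeas : ∀ i, Measurable (Z i))
    (hindep : iIndepFun Z P)
    (hgeom : ∀ i, 1 ≤ i → ∀ k : ℕ, P {ω | k ≤ Z i ω} = ENNReal.ofReal (x ^ (i * k)))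
    (n : ℕ) (hn : 1 ≤ n)
    (R : Ω → ℕ) (hRmeas : Measurable R)
    (hR : ∀ᵐ ω ∂P, ∀ᶠ N in atTop, R ω = ∑ i ∈ Finset.Icc (n + 1) N, Z i ω) :
    P {ω | 1 < R ω} ≤ ENNReal.ofReal ((x ^ (n + 1) / (1 - x)) ^ 2) := by
  classical
  -- The covering family
  set B : ℕ × ℕ → Set Ω := fun p =>
    if p.1 = p.2 then {ω | 2 ≤ Z (n + 1 + p.1) ω}
    else {ω | 1 ≤ Z (n + 1 + p.1) ω} ∩ {ω | 1 ≤ Z (n + 1 + p.2) ω} with hB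
  -- a.e. inclusion
  have hincl : {ω | 1 < R ω} ≤ᶠ[ae P] ⋃ p, B p := by
    filter_upwards [hR] with ω hω hmem
    obtain ⟨N, hN⟩ := hω.exists
    have hsum : 2 ≤ ∑ i ∈ Finset.Icc (n + 1) N, Z i ω := by
      rw [← hN]; exact hmem
    obtain ⟨i, hi, j, hj, hcase⟩ := sum_two_aux _ _ hsum
    have hi' := Finset.mem_Icc.mp hi
    have hj' := Finset.mem_Icc.mp hj
    refine Set.mem_iUnion.mpr ⟨(i - (n + 1), j - (n + 1)), ?_⟩
    have hieq : n + 1 + (i - (n + 1)) = i := by omega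
    have hjeq : n + 1 + (j - (n + 1)) = j := by omega
    rcases hcase with ⟨hij, h2⟩ | ⟨hij, h1, h2⟩
    · simp only [hB]
      rw [if_pos (by omega)]
      simpa [hieq] using h2
    · simp only [hB]
      rw [if_neg (show ¬(i - (n + 1) = j - (n + 1)) by omega)]
      refine ⟨?_, ?_⟩ <;> simp [hieq, hjeq, h1, h2]
  have hmono := measure_mono_ae hincl
  -- bound each piece
  have hx0' : (0:ℝ) ≤ x := le_of_lt hx0
  have hBle : ∀ p : ℕ × ℕ,
      P (B p) ≤ ENNReal.ofReal (x ^ (n + 1 + p.1)) * ENNReal.ofReal (x ^ (n + 1 + p.2)) := by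
    intro ⟨i, j⟩
    by_cases hij : i = j
    · simp only [hB, if_pos hij]
      subst hij
      rw [hgeom (n + 1 + i) (by omega) 2]
      rw [← ENNReal.ofReal_mul (by positivity), ← pow_add]
      apply le_of_eq
      congr 1
      ring
    · simp only [hB, if_neg hij]
      have hind := hindep.indepFun (i := n + 1 + i) (j := n + 1 + j) (by omega)
      have : {ω | 1 ≤ Z (n + 1 + i) ω} ∩ {ω | 1 ≤ Z (n + 1 + j) ω}
          = Z (n + 1 + i) ⁻¹' Set.Ici 1 ∩ Z (n + 1 + j) ⁻¹' Set.Ici 1 := rfl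
      rw [this, hind.measure_inter_preimage_eq_mul _ _ measurableSet_Ici measurableSet_Ici]
      have e1 : Z (n + 1 + i) ⁻¹' Set.Ici 1 = {ω | 1 ≤ Z (n + 1 + i) ω} := rfl
      have e2 : Z (n + 1 + j) ⁻¹' Set.Ici 1 = {ω | 1 ≤ Z (n + 1 + j) ω} := rfl
      rw [e1, e2, hgeom (n + 1 + i) (by omega) 1, hgeom (n + 1 + j) (by omega) 1]
      simp [mul_one]
  -- summability of geometric tail
  have hsummable : Summable (fun i : ℕ => x ^ (n + 1 + i)) := by
    simpa [pow_add] using (summable_geometric_of_lt_one hx0' hx1).mul_left (x ^ (n + 1))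
  have htail : ∑' i : ℕ, x ^ (n + 1 + i) = x ^ (n + 1) / (1 - x) := by
    simp only [pow_add]
    rw [tsum_mul_left, tsum_geometric_of_lt_one hx0' hx1, div_eq_mul_inv]
  have htsum1 : ∑' i : ℕ, ENNReal.ofReal (x ^ (n + 1 + i))
      = ENNReal.ofReal (x ^ (n + 1) / (1 - x)) := by
    rw [← ENNReal.ofReal_tsum_of_nonneg (fun i => by positivity) hsummable, htail]
  calc P {ω | 1 < R ω} ≤ P (⋃ p, B p) := hmono
    _ ≤ ∑' p : ℕ × ℕ, P (B p) := measure_iUnion_le _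
    _ ≤ ∑' p : ℕ × ℕ, ENNReal.ofReal (x ^ (n + 1 + p.1)) * ENNReal.ofReal (x ^ (n + 1 + p.2)) :=
        ENNReal.tsum_le_tsum hBle
    _ = (∑' i : ℕ, ENNReal.ofReal (x ^ (n + 1 + i)))
        * (∑' j : ℕ, ENNReal.ofReal (x ^ (n + 1 + j))) := by
        rw [ENNReal.tsum_prod']
        simp_rw [ENNReal.tsum_mul_left, ENNReal.tsum_mul_right]
    _ = ENNReal.ofReal ((x ^ (n + 1) / (1 - x)) ^ 2) := by
        rw [htsum1, ← ENNReal.ofReal_mul (div_nonneg (by positivity) (by linarith)), sq]
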